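/- arXiv:1407.4999 — 6 statements merged into one kernel-verified Lean document; each statement's English description precedes it below -/
import Mathlib

section
/- For any square matrix X of size k×k over a commutative ring and any scalars u_1,…,u_k, the sum over i = 1,…,k of the determinant of the matrix obtained from X by multiplying, for each column j, the (i,j) entry by u_j, equals (u_1 + u_2 + ⋯ + u_k) times det X. -/
open Matrix Finset

theorem sum_det_updateRow_smul {R : Type*} [CommRing R] {k : ℕ}
    (X : Matrix (Fin k) (Fin k) R) (u : Fin k → R) :
    ∑ i : Fin k, (X.updateRow i (fun j => u j * X i j)).det
      = (∑ j : Fin k, u j) * X.det := by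
  have key : ∀ i : Fin k, (X.updateRow i (fun j => u j * X i j)).det
      = ∑ l : Fin k, u l * X i l * adjugate X l i := by
    intro i
    have hv : (fun j => u j * X i j)
        = ∑ l : Fin k, (u l * X i l) • (Pi.single l 1 : Fin k → R) := by
      ext j
      simp [Finset.sum_apply, Pi.single_apply, eq_comm]
    have hdet : ∀ v : Fin k → R, (X.updateRow i v).det
        = Matrix.detRowAlternating (Function.update (fun r c => X r c) i v) := fun v => rfl
    rw [hv, hdet,
      (Matrix.detRowAlternating (R := R) (n := Fin k)).map_update_sum]
    refine Finset.sum_congr rfl fun l _ => ?_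
    rw [AlternatingMap.map_update_smul]
    rw [adjugate_apply, smul_eq_mul]
    rfl
  rw [Finset.sum_congr rfl fun i _ => key i, Finset.sum_comm]
  rw [Finset.sum_mul]
  refine Finset.sum_congr rfl fun l _ => ?_
  rw [det_eq_sum_mul_adjugate_col X l, Finset.mul_sum]
  simp [mul_assoc]
end

section
/- Let a_1,…,a_n, b be pairwise distinct rational numbers. There exist indices 1 ≤ i_1 < ⋯ < i_d ≤ n with b = a_{i_1} + ⋯ + a_{i_d} if and only if the (d+1)×(n+1) matrix with columns (1, a_j, a_j^2, …, a_j^d)^T for j = 1,…,n together with the column (0,…,0,1,b)^T has d+1 linearly dependent columns. -/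
open Matrix Finset Polynomial

/-- The columns of the `(d+1) × (n+1)` matrix: for `j < n` the Vandermonde-type
column `(1, a_j, a_j^2, …, a_j^d)`, and the extra column `(0, …, 0, 1, b)`
(with the `1` in coordinate `d-1` and `b` in coordinate `d`). -/
noncomputable def vardyColumn {n d : ℕ} (a : Fin n → ℚ) (b : ℚ) (j : Fin (n + 1)) :
    Fin (d + 1) → ℚ :=
  fun r =>
    if h : (j : ℕ) < n then a ⟨j, h⟩ ^ (r : ℕ)
    else if (r : ℕ) + 1 = d then 1 else if (r : ℕ) = d then b else 0


lemma vand_li {m : ℕ} {x : Fin m → ℚ} (hx : Function.Injective x) :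
    LinearIndependent ℚ (fun i : Fin m => fun r : Fin m => x i ^ (r : ℕ)) :=
  Matrix.linearIndependent_rows_iff_isUnit.2
    ((Matrix.isUnit_iff_isUnit_det _).2 (Ne.isUnit (Matrix.det_vandermonde_ne_zero_iff.2 hx)))

lemma vand_li' {m k : ℕ} (hmk : m ≤ k) {x : Fin m → ℚ} (hx : Function.Injective x) :
    LinearIndependent ℚ (fun i : Fin m => fun r : Fin k => x i ^ (r : ℕ)) := by
  apply LinearIndependent.of_comp (LinearMap.funLeft ℚ ℚ (Fin.castLE hmk))
  exact vand_li hx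

noncomputable def cmap {d : ℕ} (P : ℚ[X]) : (Fin (d+1) → ℚ) →ₗ[ℚ] ℚ :=
  ∑ r : Fin (d+1), P.coeff r • LinearMap.proj r

lemma cmap_apply {d : ℕ} (P : ℚ[X]) (v : Fin (d+1) → ℚ) :
    cmap P v = ∑ r : Fin (d+1), P.coeff r * v r := by
  simp [cmap]

lemma cmap_pow {d : ℕ} (P : ℚ[X]) (hP : P.natDegree < d + 1) (x : ℚ) :
    cmap (d := d) P (fun r => x ^ (r : ℕ)) = P.eval x := by
  rw [cmap_apply, eval_eq_sum_range' hP]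
  exact Fin.sum_univ_eq_sum_range (fun i => P.coeff i * x ^ i) (d + 1)

lemma cmap_w {d : ℕ} (hd : 0 < d) (P : ℚ[X]) (b : ℚ) :
    cmap (d := d) P (fun r => if (r : ℕ) + 1 = d then 1 else if (r : ℕ) = d then b else 0)
      = P.coeff (d - 1) + P.coeff d * b := by
  rw [cmap_apply]
  have key : ∀ r : Fin (d + 1),
      P.coeff r * (if (r : ℕ) + 1 = d then 1 else if (r : ℕ) = d then b else 0)
      = (if r = (⟨d - 1, by omega⟩ : Fin (d+1)) then P.coeff (d - 1) else 0)
        + (if r = (⟨d, by omega⟩ : Fin (d+1)) then P.coeff d * b else 0) := by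
    intro r
    simp only [Fin.ext_iff]
    by_cases h1 : (r : ℕ) + 1 = d
    · have h2 : (r : ℕ) = d - 1 := by omega
      have h3 : ¬ (r : ℕ) = d := by omega
      rw [if_pos h1, if_pos h2, if_neg h3, h2]
      ring
    · by_cases h2 : (r : ℕ) = d
      · have h3 : ¬ (r : ℕ) = d - 1 := by omega
        rw [if_neg h1, if_pos h2, if_neg h3, if_pos h2, h2]
        ring
      · rw [if_neg h1, if_neg h2, if_neg (by omega), if_neg h2]
        ring
  rw [Finset.sum_congr rfl fun r _ => key r, Finset.sum_add_distrib,
    Finset.sum_ite_eq', Finset.sum_ite_eq']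
  simp

lemma not_li_of_mem_ker {d : ℕ} {c : (Fin (d+1) → ℚ) →ₗ[ℚ] ℚ} (hc : c ≠ 0)
    {ι : Type} [Fintype ι] (hcard : Fintype.card ι = d + 1)
    (v : ι → (Fin (d+1) → ℚ)) (hv : ∀ i, c (v i) = 0) :
    ¬ LinearIndependent ℚ v := by
  intro li
  have hker : ∀ i, v i ∈ LinearMap.ker c := hv
  have li' : LinearIndependent ℚ (fun i => (⟨v i, hker i⟩ : LinearMap.ker c)) := by
    apply LinearIndependent.of_comp (LinearMap.ker c).subtype
    exact li
  have hfr : Module.finrank ℚ (LinearMap.ker c) = d := by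
    have h1 := LinearMap.finrank_range_add_finrank_ker c
    have h2 : Module.finrank ℚ (LinearMap.range c) = 1 := by
      have hrt : LinearMap.range c = ⊤ := by
        rw [LinearMap.range_eq_top]
        intro y
        obtain ⟨x, hx⟩ : ∃ x, c x ≠ 0 := by
          by_contra h
          push_neg at h
          exact hc (LinearMap.ext fun x => h x)
        refine ⟨(y * (c x)⁻¹) • x, ?_⟩
        rw [LinearMap.map_smul, smul_eq_mul]
        field_simp
      rw [hrt, finrank_top]
      simp
    rw [h2, Module.finrank_fin_fun] at h1
    omega
  have hle := li'.fintype_card_le_finrank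
  rw [hcard, hfr] at hle
  omega

lemma vardy_last {n d : ℕ} (a : Fin n → ℚ) (b : ℚ) :
    vardyColumn (d := d) a b (Fin.last n)
      = fun r : Fin (d+1) => if (r : ℕ) + 1 = d then 1 else if (r : ℕ) = d then b else 0 := by
  funext r
  simp [vardyColumn]

lemma vardy_lt {n d : ℕ} (a : Fin n → ℚ) (b : ℚ) (j : Fin (n+1)) (h : (j : ℕ) < n) :
    vardyColumn (d := d) a b j = fun r : Fin (d+1) => a ⟨j, h⟩ ^ (r : ℕ) := by
  funext r
  simp [vardyColumn, dif_pos h]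

theorem subset_sum_iff_dependent_columns {n d : ℕ} (hd : 0 < d)
    (a : Fin n → ℚ) (ha : Function.Injective a) (b : ℚ) :
    (∃ s : Finset (Fin n), s.card = d ∧ ∑ j ∈ s, a j = b) ↔
      ∃ t : Finset (Fin (n + 1)), t.card = d + 1 ∧
        ¬ LinearIndependent ℚ (fun j : {x // x ∈ t} => vardyColumn (d := d) a b j.1) := by
  constructor
  · rintro ⟨s, hsc, hsum⟩
    set emb : Fin n ↪ Fin (n+1) := ⟨Fin.castSucc, Fin.castSucc_injective n⟩ with hemb
    have hnm : Fin.last n ∉ s.map emb := by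
      simp only [Finset.mem_map, hemb, Function.Embedding.coeFn_mk]
      rintro ⟨j, -, hj⟩
      exact absurd hj (Fin.castSucc_lt_last j).ne
    refine ⟨insert (Fin.last n) (s.map emb), ?_, ?_⟩
    · rw [Finset.card_insert_of_notMem hnm, Finset.card_map, hsc]
    · set P : Polynomial ℚ := ∏ j ∈ s, (X - C (a j)) with hP
      have hmonic : P.Monic := monic_prod_of_monic _ _ fun _ _ => monic_X_sub_C _
      have hdeg : P.natDegree = d := by
        rw [hP, natDegree_prod_of_monic _ _ fun _ _ => monic_X_sub_C _]
        simp [hsc]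
      have hcd : P.coeff d = 1 := by
        have := hmonic.coeff_natDegree
        rwa [hdeg] at this
      have hcd1 : P.coeff (d - 1) = -b := by
        have h1 := prod_X_sub_C_nextCoeff (s := s) a
        rw [nextCoeff_of_natDegree_pos (by rw [hdeg]; exact hd), hdeg, hsum] at h1
        exact h1
      have hc : cmap (d := d) P ≠ 0 := by
        intro h
        have h2 : cmap (d := d) P (Pi.single (⟨d, by omega⟩ : Fin (d+1)) 1) = 0 := by
          rw [h]; rfl
        rw [cmap_apply] at h2
        simp only [Pi.single_apply, mul_ite, mul_one, mul_zero,
          Finset.sum_ite_eq', Finset.mem_univ, if_pos] at h2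
        rw [hcd] at h2
        exact one_ne_zero h2
      apply not_li_of_mem_ker hc
      · rw [Fintype.card_coe, Finset.card_insert_of_notMem hnm, Finset.card_map, hsc]
      · rintro ⟨j, hj⟩
        rcases Finset.mem_insert.1 hj with h | h
        · show cmap (d := d) P (vardyColumn a b j) = 0
          subst h
          rw [vardy_last, cmap_w hd, hcd1, hcd]
          ring
        · show cmap (d := d) P (vardyColumn a b j) = 0
          rw [Finset.mem_map] at h
          obtain ⟨jj, hjjs, hjje⟩ := h
          have hlt : (j : ℕ) < n := by
            rw [← hjje]; exact jj.isLt
          rw [vardy_lt a b j hlt, cmap_pow P (by omega) _]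
          have hjj : (⟨(j : ℕ), hlt⟩ : Fin n) = jj := by
            apply Fin.ext
            simp [← hjje, hemb]
          rw [hjj, hP, eval_prod]
          exact Finset.prod_eq_zero hjjs (by simp)
  · rintro ⟨t, htc, hdep⟩
    by_cases hL : Fin.last n ∈ t
    · -- main case
      set s : Finset (Fin n) := Finset.univ.filter (fun j => j.castSucc ∈ t) with hs
      have himg : s.image Fin.castSucc = t.erase (Fin.last n) := by
        ext k
        simp only [Finset.mem_image, Finset.mem_erase, hs, Finset.mem_filter,
          Finset.mem_univ, true_and]
        constructor
        · rintro ⟨j, hjt, rfl⟩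
          exact ⟨(Fin.castSucc_lt_last j).ne, hjt⟩
        · rintro ⟨hkne, hkt⟩
          have hklt : (k : ℕ) < n := by
            have h2 := k.isLt
            rcases Nat.lt_succ_iff_lt_or_eq.1 h2 with h | h
            · exact h
            · exact absurd (by rw [Fin.ext_iff]; simpa using h) hkne
          exact ⟨⟨k, hklt⟩, by simpa [Fin.ext_iff] using hkt, by simp [Fin.ext_iff]⟩
      have hcs : s.card = d := by
        have h1 : (s.image Fin.castSucc).card = s.card :=
          Finset.card_image_of_injective _ (Fin.castSucc_injective n)
        rw [himg, Finset.card_erase_of_mem hL, htc] at h1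
        omega
      set P : Polynomial ℚ := ∏ j ∈ s, (X - C (a j)) with hP
      have hmonic : P.Monic := monic_prod_of_monic _ _ fun _ _ => monic_X_sub_C _
      have hdeg : P.natDegree = d := by
        rw [hP, natDegree_prod_of_monic _ _ fun _ _ => monic_X_sub_C _]
        simp [hcs]
      have hcd : P.coeff d = 1 := by
        have := hmonic.coeff_natDegree
        rwa [hdeg] at this
      have hcd1 : P.coeff (d - 1) = -∑ j ∈ s, a j := by
        have h1 := prod_X_sub_C_nextCoeff (s := s) a
        rw [nextCoeff_of_natDegree_pos (by rw [hdeg]; exact hd), hdeg] at h1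
        exact h1
      obtain ⟨g, hg0, i0, hi0⟩ := Fintype.not_linearIndependent_iff.1 hdep
      set G : Fin (n+1) → ℚ := fun j => if h : j ∈ t then g ⟨j, h⟩ else 0 with hG
      have hsum0 : ∑ j ∈ t, G j • vardyColumn (d := d) a b j = 0 := by
        rw [← Finset.sum_attach t (fun j => G j • vardyColumn (d := d) a b j), ← hg0,
          Finset.univ_eq_attach]
        apply Finset.sum_congr rfl
        rintro ⟨j, hj⟩ -
        rw [hG]
        simp [dif_pos hj]
      have hcsz : ∀ j ∈ s, cmap (d := d) P (vardyColumn (d := d) a b j.castSucc) = 0 := by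
        intro j hjs
        have hlt : ((j.castSucc : Fin (n+1)) : ℕ) < n := j.isLt
        rw [vardy_lt a b _ hlt, cmap_pow P (by omega)]
        have he : (⟨((j.castSucc : Fin (n+1)) : ℕ), hlt⟩ : Fin n) = j := by
          apply Fin.ext; simp
        rw [he, hP, eval_prod]
        exact Finset.prod_eq_zero hjs (by simp)
      have hkey : G (Fin.last n) * (-∑ j ∈ s, a j + b) = 0 := by
        have happ := congrArg (cmap (d := d) P) hsum0
        rw [map_sum, map_zero] at happ
        have hrw : ∀ j ∈ t, cmap (d := d) P (G j • vardyColumn (d := d) a b j)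
            = G j * cmap (d := d) P (vardyColumn (d := d) a b j) := by
          intro j _
          rw [LinearMap.map_smul, smul_eq_mul]
        rw [Finset.sum_congr rfl hrw] at happ
        rw [← Finset.insert_erase hL, Finset.sum_insert (Finset.notMem_erase _ _),
          ← himg, Finset.sum_image (fun x _ y _ h => Fin.castSucc_injective n h)] at happ
        have hz : ∀ j ∈ s, G j.castSucc * cmap (d := d) P (vardyColumn (d := d) a b j.castSucc) = 0 := by
          intro j hjs
          rw [hcsz j hjs, mul_zero]
        rw [Finset.sum_congr rfl hz, Finset.sum_const_zero, add_zero] at happ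
        rw [vardy_last, cmap_w hd, hcd1, hcd, one_mul] at happ
        exact happ
      by_cases hGL : G (Fin.last n) = 0
      · exfalso
        have hzero : ∑ j ∈ s, G j.castSucc • (fun r : Fin (d+1) => a j ^ (r : ℕ)) = 0 := by
          have hthis := hsum0
          rw [← Finset.insert_erase hL, Finset.sum_insert (Finset.notMem_erase _ _),
            hGL, zero_smul, zero_add, ← himg,
            Finset.sum_image (fun x _ y _ h => Fin.castSucc_injective n h)] at hthis
          rw [← hthis]
          apply Finset.sum_congr rfl
          intro j hjs
          have hlt : ((j.castSucc : Fin (n+1)) : ℕ) < n := j.isLt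
          rw [vardy_lt a b _ hlt]
          have he : (⟨((j.castSucc : Fin (n+1)) : ℕ), hlt⟩ : Fin n) = j := by
            apply Fin.ext; simp
          rw [he]
        have hli : LinearIndependent ℚ
            (fun j : {x // x ∈ s} => fun r : Fin (d+1) => a j.1 ^ (r : ℕ)) := by
          have e2 : Fin d ≃ {x // x ∈ s} := (s.equivFin.trans (finCongr hcs)).symm
          rw [← linearIndependent_equiv e2]
          have hx : Function.Injective (fun i : Fin d => a (e2 i).1) := by
            intro i1 i2 h12
            exact e2.injective (Subtype.ext (ha h12))
          exact vand_li' (Nat.le_succ d) hx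
        have hall := Fintype.linearIndependent_iff.1 hli (fun j => G j.1.castSucc) ?_
        · have hi0ne : i0.1 ≠ Fin.last n := by
            intro h
            apply hi0
            have hGg : G i0.1 = g i0 := by rw [hG]; simp [dif_pos i0.2]
            rw [← hGg, h, hGL]
          have hi0lt : (i0.1 : ℕ) < n := by
            have h2 := i0.1.isLt
            rcases Nat.lt_succ_iff_lt_or_eq.1 h2 with h | h
            · exact h
            · exact absurd (by rw [Fin.ext_iff]; simpa using h) hi0ne
          have hcast : (⟨(i0.1 : ℕ), hi0lt⟩ : Fin n).castSucc = i0.1 := by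
            apply Fin.ext; simp
          have hmem : (⟨(i0.1 : ℕ), hi0lt⟩ : Fin n) ∈ s := by
            rw [hs]
            simp only [Finset.mem_filter, Finset.mem_univ, true_and]
            rw [hcast]; exact i0.2
          have hv := hall ⟨⟨(i0.1 : ℕ), hi0lt⟩, hmem⟩
          apply hi0
          rw [hcast] at hv
          have hGz : G i0.1 = 0 := hv
          rw [hG] at hGz
          simpa [dif_pos i0.2] using hGz
        · rw [← Finset.sum_attach s
            (fun j => G j.castSucc • (fun r : Fin (d+1) => a j ^ (r : ℕ)))] at hzero
          rw [Finset.univ_eq_attach]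
          exact hzero
      · refine ⟨s, hcs, ?_⟩
        rcases mul_eq_zero.1 hkey with h | h
        · exact absurd h hGL
        · linarith [h]
    · exfalso
      apply hdep
      have hlt : ∀ j ∈ t, (j : ℕ) < n := by
        intro j hj
        have h2 := j.isLt
        rcases Nat.lt_succ_iff_lt_or_eq.1 h2 with h | h
        · exact h
        · refine absurd hj ?_
          have : j = Fin.last n := by rw [Fin.ext_iff]; simpa using h
          rw [this]; exact hL
      have e : Fin (d+1) ≃ {x // x ∈ t} := (t.equivFin.trans (finCongr htc)).symm
      rw [← linearIndependent_equiv e]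
      have hx : Function.Injective (fun i : Fin (d+1) => a ⟨((e i).1 : ℕ), hlt _ (e i).2⟩) := by
        intro i1 i2 h12
        have h3 : (e i1).1 = (e i2).1 := Fin.ext (congrArg (Fin.val : Fin n → ℕ) (ha h12))
        exact e.injective (Subtype.ext h3)
      have hli := vand_li' (le_refl (d+1)) hx
      convert hli using 1
      funext i
      exact vardy_lt a b (e i).1 (hlt _ (e i).2)
end

section
/- A finite connected graph on at least 3 vertices has its edge set partitionable into two (nonempty) cuts if and only if it is bipartite. -/
open SimpleGraph

/-- The set of edges of `G` having exactly one endpoint in `S`. -/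
def cutEdges {V : Type*} (G : SimpleGraph V) (S : Set V) : Set (Sym2 V) :=
  {e | e ∈ G.edgeSet ∧ ∃ x y, e = s(x, y) ∧ x ∈ S ∧ y ∉ S}

lemma mem_cutEdges_iff {V : Type*} (G : SimpleGraph V) (S : Set V) {x y : V}
    (h : G.Adj x y) :
    s(x, y) ∈ cutEdges G S ↔ (x ∈ S ∧ y ∉ S) ∨ (y ∈ S ∧ x ∉ S) := by
  constructor
  · rintro ⟨-, u, v, huv, hu, hv⟩
    rcases Sym2.eq_iff.mp huv with ⟨rfl, rfl⟩ | ⟨rfl, rfl⟩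
    · exact Or.inl ⟨hu, hv⟩
    · exact Or.inr ⟨hu, hv⟩
  · rintro (⟨hx, hy⟩ | ⟨hy, hx⟩)
    · exact ⟨G.mem_edgeSet.mpr h, x, y, rfl, hx, hy⟩
    · exact ⟨G.mem_edgeSet.mpr h, y, x, Sym2.eq_swap, hy, hx⟩

lemma exists_adj_of_connected {V : Type*} [Fintype V] (G : SimpleGraph V)
    (hG : G.Connected) (hV : 2 ≤ Fintype.card V) (v : V) : ∃ w, G.Adj v w := by
  obtain ⟨w, hw⟩ := Fintype.exists_ne_of_one_lt_card (by omega) v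
  obtain ⟨p⟩ := hG.preconnected v w
  cases p with
  | nil => exact absurd rfl hw
  | cons h _ => exact ⟨_, h⟩

lemma aux_bipartite_to_cuts {V : Type*} [Fintype V] (G : SimpleGraph V)
    (hG : G.Connected) (hV : 3 ≤ Fintype.card V) (P : V → Prop)
    (hP : ∀ {x y}, G.Adj x y → (P x ↔ ¬ P y))
    (a b : V) (hab : a ≠ b) (ha : P a) (hb : P b) :
    ∃ S₁ S₂ : Set V,
        S₁.Nonempty ∧ S₁ ≠ Set.univ ∧ S₂.Nonempty ∧ S₂ ≠ Set.univ ∧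
        (cutEdges G S₁).Nonempty ∧ (cutEdges G S₂).Nonempty ∧
        Disjoint (cutEdges G S₁) (cutEdges G S₂) ∧
        G.edgeSet = cutEdges G S₁ ∪ cutEdges G S₂ := by
  refine ⟨{a}, {v | P v ∧ v ≠ a}, ⟨a, rfl⟩, ?_, ⟨b, hb, hab.symm⟩, ?_, ?_, ?_, ?_, ?_⟩
  · intro h
    have : b ∈ ({a} : Set V) := h ▸ Set.mem_univ b
    exact hab.symm this
  · intro h
    have : a ∈ {v | P v ∧ v ≠ a} := h ▸ Set.mem_univ a
    exact this.2 rfl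
  · obtain ⟨w, hw⟩ := exists_adj_of_connected G hG (by omega) a
    exact ⟨s(a, w), (mem_cutEdges_iff G _ hw).mpr (Or.inl ⟨rfl, fun hm => hw.ne' hm⟩)⟩
  · obtain ⟨w, hw⟩ := exists_adj_of_connected G hG (by omega) b
    have hwP : ¬ P w := (hP hw).mp hb
    exact ⟨s(b, w), (mem_cutEdges_iff G _ hw).mpr (Or.inl ⟨⟨hb, hab.symm⟩, fun hm => hwP hm.1⟩)⟩
  · rw [Set.disjoint_left]
    rintro e ⟨he, u, v, rfl, hu, hv⟩ h2
    have hu' : u = a := hu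
    subst hu'
    have hadj : G.Adj u v := G.mem_edgeSet.mp he
    have hv' : ¬ P v := (hP hadj).mp ha
    rcases (mem_cutEdges_iff G _ hadj).mp h2 with ⟨h', -⟩ | ⟨h', -⟩
    · exact h'.2 rfl
    · exact hv' h'.1
  · ext e
    constructor
    · intro he
      induction e using Sym2.ind with
      | _ x y =>
        have hadj : G.Adj x y := G.mem_edgeSet.mp he
        rcases Classical.em (P x) with hx | hx
        · have hy : ¬ P y := (hP hadj).mp hx
          rcases Classical.em (x = a) with rfl | hxa
          · exact Or.inl ((mem_cutEdges_iff G _ hadj).mpr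
              (Or.inl ⟨rfl, fun hm => hy (hm ▸ hx)⟩))
          · exact Or.inr ((mem_cutEdges_iff G _ hadj).mpr
              (Or.inl ⟨⟨hx, hxa⟩, fun hm => hy hm.1⟩))
        · have hy : P y := by
            by_contra hy
            exact hy (((hP hadj.symm).mpr hx))
          rcases Classical.em (y = a) with rfl | hya
          · exact Or.inl ((mem_cutEdges_iff G _ hadj).mpr
              (Or.inr ⟨rfl, fun hm => hx (hm ▸ hy)⟩))
          · exact Or.inr ((mem_cutEdges_iff G _ hadj).mpr
              (Or.inr ⟨⟨hy, hya⟩, fun hm => hx hm.1⟩))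
    · rintro (⟨h, -⟩ | ⟨h, -⟩) <;> exact h

theorem edge_partition_into_two_cuts_iff_bipartite {V : Type*} [Fintype V]
    (G : SimpleGraph V) (hG : G.Connected) (hV : 3 ≤ Fintype.card V) :
    (∃ S₁ S₂ : Set V,
        S₁.Nonempty ∧ S₁ ≠ Set.univ ∧ S₂.Nonempty ∧ S₂ ≠ Set.univ ∧
        (cutEdges G S₁).Nonempty ∧ (cutEdges G S₂).Nonempty ∧
        Disjoint (cutEdges G S₁) (cutEdges G S₂) ∧
        G.edgeSet = cutEdges G S₁ ∪ cutEdges G S₂) ↔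
      G.Colorable 2 := by
  classical
  constructor
  · rintro ⟨S₁, S₂, -, -, -, -, -, -, hdisj, hunion⟩
    refine ⟨SimpleGraph.Coloring.mk
      (fun v => if (v ∈ S₁ ↔ v ∈ S₂) then (0 : Fin 2) else 1) ?_⟩
    intro x y h
    have hm : s(x, y) ∈ cutEdges G S₁ ∨ s(x, y) ∈ cutEdges G S₂ := by
      rw [← Set.mem_union, ← hunion]
      exact G.mem_edgeSet.mpr h
    have hn : ¬ (s(x, y) ∈ cutEdges G S₁ ∧ s(x, y) ∈ cutEdges G S₂) :=
      fun ⟨h1, h2⟩ => Set.disjoint_left.mp hdisj h1 h2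
    rw [mem_cutEdges_iff G S₁ h, mem_cutEdges_iff G S₂ h] at hm hn
    split_ifs with h1 h2 h2
    · exfalso; tauto
    · exact fun hc => absurd hc (by decide)
    · exact fun hc => absurd hc (by decide)
    · exfalso; tauto
  · intro hcol
    obtain ⟨c⟩ := hcol
    have key : ∀ u v : Fin 2, u ≠ v → ((u = 0 ↔ ¬ v = 0) ∧ (u = 1 ↔ ¬ v = 1)) := by decide
    have hcard := Finset.card_filter_add_card_filter_not
      (s := Finset.univ) (p := fun v => c v = 0)
    rw [Finset.card_univ] at hcard
    have hsplit : 2 ≤ (Finset.univ.filter (fun v => c v = 0)).card ∨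
        2 ≤ (Finset.univ.filter (fun v => ¬ c v = 0)).card := by omega
    rcases hsplit with hbig | hbig
    · obtain ⟨a, ha, b, hb, hab⟩ := Finset.one_lt_card.mp hbig
      simp only [Finset.mem_filter] at ha hb
      exact aux_bipartite_to_cuts G hG hV (fun v => c v = 0)
        (fun h => (key _ _ (c.valid h)).1) a b hab ha.2 hb.2
    · obtain ⟨a, ha, b, hb, hab⟩ := Finset.one_lt_card.mp hbig
      simp only [Finset.mem_filter] at ha hb
      exact aux_bipartite_to_cuts G hG hV (fun v => ¬ c v = 0)
        (fun {x y} h => by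
          have := (key _ _ (c.valid h)).1
          tauto) a b hab ha.2 hb.2
end

section
/- In a matroid M, there exist a circuit and a cocircuit (cut) that are disjoint if and only if M is not uniform. Equivalently: every circuit of M contains a base if and only if M is a uniform matroid. -/
/-- A circuit of a matroid: a minimal dependent subset of the ground set. -/
def Matroid.IsCircuit' {α : Type*} (M : Matroid α) (C : Set α) : Prop :=
  C ⊆ M.E ∧ ¬ M.Indep C ∧ ∀ D ⊂ C, M.Indep D

/-- A cocircuit of a matroid: a circuit of the dual matroid. -/
def Matroid.IsCocircuit' {α : Type*} (M : Matroid α) (K : Set α) : Prop :=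
  M✶.IsCircuit' K

/-- A matroid is uniform if its independent sets are exactly the subsets of the
ground set of size at most `r`, for some `r`. -/
def Matroid.IsUniform {α : Type*} (M : Matroid α) : Prop :=
  ∃ r : ℕ, ∀ I ⊆ M.E, (M.Indep I ↔ I.ncard ≤ r)


open Set

namespace MyAux

variable {α : Type*} {M : Matroid α} {I B C K : Set α}

/-- An independent set at least as large as a base is a base (finite matroid). -/
lemma base_of_indep_card [M.Finite] (hI : M.Indep I) {B : Set α} (hB : M.IsBase B)
    (hcard : B.ncard ≤ I.ncard) : M.IsBase I := by
  obtain ⟨B₂, hB₂, hIB₂⟩ := hI.exists_isBase_superset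
  have hfin : B₂.Finite := M.set_finite B₂ hB₂.subset_ground
  have h2 : B₂.ncard = B.ncard := hB₂.ncard_eq_ncard_of_isBase hB
  have : I = B₂ := Set.eq_of_subset_of_ncard_le hIB₂ (by omega) hfin
  rwa [this]

lemma indep_card_le_base_card [M.Finite] (hI : M.Indep I) (hB : M.IsBase B) :
    I.ncard ≤ B.ncard := by
  obtain ⟨B₂, hB₂, hIB₂⟩ := hI.exists_isBase_superset
  have hfin : B₂.Finite := M.set_finite B₂ hB₂.subset_ground
  calc I.ncard ≤ B₂.ncard := Set.ncard_le_ncard hIB₂ hfin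
    _ = B.ncard := hB₂.ncard_eq_ncard_of_isBase hB

/-- Every dependent set contains a circuit (finite matroid). -/
lemma exists_circuit_subset [M.Finite] (hIE : I ⊆ M.E) (hI : ¬ M.Indep I) :
    ∃ C ⊆ I, M.IsCircuit' C := by
  have hIfin : I.Finite := M.ground_finite.subset hIE
  set S : Set ℕ := {n | ∃ D, D ⊆ I ∧ ¬ M.Indep D ∧ D.ncard = n} with hS
  have hne : S.Nonempty := ⟨I.ncard, I, Subset.rfl, hI, rfl⟩
  obtain ⟨C, hCI, hCdep, hCcard⟩ := Nat.sInf_mem hne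
  refine ⟨C, hCI, hCI.trans hIE, hCdep, fun D hD => ?_⟩
  by_contra hDdep
  have hDfin : D.Finite := hIfin.subset (hD.subset.trans hCI)
  have hDlt : D.ncard < C.ncard :=
    Set.ncard_lt_ncard hD (hIfin.subset hCI)
  have : D.ncard ∈ S := ⟨D, hD.subset.trans hCI, hDdep, rfl⟩
  have := Nat.sInf_le this
  omega

/-- The complement of the closure of `B \ {f}` for a base `B` and `f ∈ B` is a cocircuit. -/
lemma cocircuit_compl_closure [M.Finite] (hB : M.IsBase B) {f : α} (hf : f ∈ B) :
    M.IsCocircuit' (M.E \ M.closure (B \ {f})) := by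
  set H := M.closure (B \ {f}) with hH
  have hHE : H ⊆ M.E := M.closure_subset_ground _
  have hfE : f ∈ M.E := hB.subset_ground hf
  have hfH : f ∉ H := hB.indep.notMem_closure_sdiff_of_mem hf
  have hBf : M.Indep (B \ {f}) := hB.indep.subset diff_subset
  refine ⟨by rw [Matroid.dual_ground]; exact Set.diff_subset, ?_, ?_⟩
  · -- dependent in dual: no base is disjoint from it
    rw [Matroid.dual_indep_iff_exists']
    rintro ⟨-, B'', hB'', hdisj⟩
    have hB''H : B'' ⊆ H := fun x hx => by
      by_contra hxH
      exact hdisj.ne_of_mem ⟨hB''.subset_ground hx, hxH⟩ hx rfl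
    have : M.closure B'' ⊆ H := by
      calc M.closure B'' ⊆ M.closure H := M.closure_subset_closure hB''H
        _ = H := by rw [hH, Matroid.closure_closure]
    rw [hB''.closure_eq] at this
    exact hfH (this hfE)
  · -- every proper subset is dual-independent
    intro D hD
    obtain ⟨g, hgK, hgD⟩ := exists_of_ssubset hD
    have hgH : g ∉ H := hgK.2
    have hgE : g ∈ M.E := hgK.1
    have hgB : g ∉ B \ {f} := fun h => hgH (M.subset_closure _ (hBf.subset_ground) h)
    have hind : M.Indep (insert g (B \ {f})) := by
      rw [hBf.insert_indep_iff_of_notMem hgB]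
      exact ⟨hgE, hgH⟩
    have hbase : M.IsBase (insert g (B \ {f})) := by
      refine base_of_indep_card hind hB ?_
      have hBfin : B.Finite := M.set_finite B hB.subset_ground
      rw [Set.ncard_insert_of_notMem hgB (hBfin.subset diff_subset)]
      have h1 : (B \ {f}).ncard = B.ncard - 1 := by
        rw [Set.ncard_sdiff_singleton_of_mem hf]
      have h2 : 0 < B.ncard := (Set.ncard_pos hBfin).mpr ⟨f, hf⟩
      omega
    rw [Matroid.dual_indep_iff_exists' ]
    refine ⟨hD.subset.trans diff_subset, insert g (B \ {f}), hbase, ?_⟩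
    rw [disjoint_comm, Set.disjoint_iff_forall_ne]
    rintro x hx y hy rfl
    rcases hx with rfl | hx
    · exact hgD hy
    · exact (hD.subset hy).2 (M.subset_closure _ hBf.subset_ground hx)

end MyAux

open MyAux in
theorem disjoint_circuit_cocircuit_iff_not_uniform {α : Type*}
    (M : Matroid α) [M.Finite] :
    (∃ C K : Set α, M.IsCircuit' C ∧ M.IsCocircuit' K ∧ Disjoint C K) ↔
      ¬ M.IsUniform := by
  constructor
  · rintro ⟨C, K, ⟨hCE, hCdep, hCmin⟩, ⟨hKE, hKdep, hKmin⟩, hdisj⟩ ⟨r, hr⟩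
    rw [Matroid.dual_ground] at hKE
    have hCfin : C.Finite := M.ground_finite.subset hCE
    have hrC : r < C.ncard := by
      by_contra h
      push_neg at h
      exact hCdep ((hr C hCE).mpr h)
    obtain ⟨B, hBC, hBcard⟩ := Set.exists_subset_card_eq hrC.le
    have hBE : B ⊆ M.E := hBC.trans hCE
    have hBindep : M.Indep B := (hr B hBE).mpr hBcard.le
    have hBbase : M.IsBase B := by
      refine hBindep.isBase_of_maximal fun J hJ hBJ => ?_
      have hJfin : J.Finite := M.ground_finite.subset hJ.subset_ground
      have hJcard : J.ncard ≤ r := (hr J hJ.subset_ground).mp hJ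
      exact Set.eq_of_subset_of_ncard_le hBJ (by omega) hJfin
    rw [Matroid.dual_indep_iff_exists'] at hKdep
    exact hKdep ⟨hKE, B, hBbase, (hdisj.mono_left hBC).symm⟩
  · intro hnu
    obtain ⟨B₀, hB₀⟩ := M.exists_isBase
    set r := B₀.ncard with hr
    have key : ∃ I, I ⊆ M.E ∧ ¬ M.Indep I ∧ I.ncard ≤ r := by
      by_contra h
      exact hnu ⟨r, fun I hIE => ⟨fun hI => indep_card_le_base_card hI hB₀,
        fun hle => by_contra fun hdep => h ⟨I, hIE, hdep, hle⟩⟩⟩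
    obtain ⟨I, hIE, hIdep, hIcard⟩ := key
    obtain ⟨C, hCI, hCE, hCdep, hCmin⟩ := exists_circuit_subset hIE hIdep
    have hCfin : C.Finite := M.ground_finite.subset hCE
    have hIfin : I.Finite := M.ground_finite.subset hIE
    have hCcard : C.ncard ≤ r := (Set.ncard_le_ncard hCI hIfin).trans hIcard
    have hCne : C.Nonempty := by
      rcases C.eq_empty_or_nonempty with rfl | h
      · exact absurd M.empty_indep hCdep
      · exact h
    obtain ⟨e, he⟩ := hCne
    have hC'ss : C \ {e} ⊂ C := Set.sdiff_singleton_ssubset.mpr he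
    have hC' : M.Indep (C \ {e}) := hCmin _ hC'ss
    obtain ⟨B, hB, hC'B⟩ := hC'.exists_isBase_superset
    have hBfin : B.Finite := M.set_finite B hB.subset_ground
    have hBcard : B.ncard = r := hB.ncard_eq_ncard_of_isBase hB₀
    have heB : e ∉ B := by
      intro heB
      have : C ⊆ B := by
        intro x hx
        rcases eq_or_ne x e with rfl | hne
        · exact heB
        · exact hC'B ⟨hx, hne⟩
      exact hCdep (hB.indep.subset this)
    have hC'card : (C \ {e}).ncard = C.ncard - 1 :=
      Set.ncard_sdiff_singleton_of_mem he
    have hCpos : 0 < C.ncard := (Set.ncard_pos hCfin).mpr ⟨e, he⟩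
    have hBC' : ∃ f, f ∈ B \ (C \ {e}) := by
      by_contra h
      push_neg at h
      have hsub : B ⊆ C \ {e} := fun x hx => by
        by_contra hx'
        exact h x ⟨hx, hx'⟩
      have : B = C \ {e} := hsub.antisymm hC'B
      rw [this] at hBcard
      omega
    obtain ⟨f, hfB, hfC'⟩ := hBC'
    have hfC : f ∉ C := by
      intro hfC
      rcases eq_or_ne f e with rfl | hne
      · exact heB hfB
      · exact hfC' ⟨hfC, hne⟩
    refine ⟨C, M.E \ M.closure (B \ {f}), ⟨hCE, hCdep, hCmin⟩,
      cocircuit_compl_closure hB hfB, ?_⟩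
    have hC'Bf : C \ {e} ⊆ B \ {f} := fun x hx =>
      ⟨hC'B hx, fun h => hfC (h ▸ hx.1)⟩
    have hCcl : C ⊆ M.closure (B \ {f}) := by
      intro x hx
      rcases eq_or_ne x e with rfl | hne
      · have heD : M.Dep (insert x (C \ {x})) := by
          rw [Set.insert_diff_singleton, Set.insert_eq_of_mem hx]
          exact ⟨hCdep, hCE⟩
        have : x ∈ M.closure (C \ {x}) := hC'.mem_closure_iff.mpr (Or.inl heD)
        exact M.closure_subset_closure hC'Bf this
      · exact M.subset_closure _ (hB.indep.subset diff_subset).subset_ground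
          (hC'Bf ⟨hx, hne⟩)
    rw [Set.disjoint_left]
    intro x hx hx'
    exact hx'.2 (hCcl hx)
end

section
/- Let x_1, …, x_k be nonnegative integers each having at most 3 ones in their binary representation, corresponding to pairwise disjoint 3-element subsets S_1, …, S_k of {0,…,m−1} (i.e., x_ℓ = Σ_{j ∈ S_ℓ} 2^j). Then x_1 + ⋯ + x_k = 2^m − 1 if and only if S_1, …, S_k partition {0,…,m−1}; more generally, for 3-element subsets S_1,…,S_d of {0,…,m−1} with m = 3d, Σ_ℓ Σ_{j∈S_ℓ} 2^j = 2^m − 1 if and only if the S_ℓ are pairwise disjoint and cover {0,…,m−1}. -/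
open Finset

/-- Key integer lemma: if `e j ≥ -1` for all `j < m` and `∑ e j * 2^j ≤ 0`, then
`∑ e j * 2^j ≤ ∑ e j`, and in the equality case with both sums zero, all `e j = 0`. -/
lemma aux_key (m : ℕ) : ∀ e : ℕ → ℤ, (∀ j < m, -1 ≤ e j) →
    (∑ j ∈ range m, e j * 2 ^ j) ≤ 0 →
    ((∑ j ∈ range m, e j * 2 ^ j) ≤ ∑ j ∈ range m, e j ∧
      ((∑ j ∈ range m, e j * 2 ^ j) = 0 → (∑ j ∈ range m, e j) = 0 →
        ∀ j < m, e j = 0)) := by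
  induction m with
  | zero => intro e _ _; simp
  | succ m ih =>
    intro e he hv
    have hsplit : (∑ j ∈ range (m + 1), e j * 2 ^ j)
        = (∑ j ∈ range m, e (j + 1) * 2 ^ j) * 2 + e 0 := by
      rw [Finset.sum_range_succ' (fun j => e j * 2 ^ j), Finset.sum_mul]
      simp only [pow_zero, mul_one]
      congr 1
      exact Finset.sum_congr rfl fun j _ => by rw [pow_succ]; ring
    have hsplit' : (∑ j ∈ range (m + 1), e j)
        = (∑ j ∈ range m, e (j + 1)) + e 0 :=
      Finset.sum_range_succ' (fun j => e j) m
    have he0 : -1 ≤ e 0 := he 0 (Nat.succ_pos m)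
    have hwle : (∑ j ∈ range m, e (j + 1) * 2 ^ j) ≤ 0 := by
      rw [hsplit] at hv
      omega
    have ihm := ih (fun j => e (j + 1)) (fun j hj => he (j + 1) (by omega)) hwle
    have hws : (∑ j ∈ range m, e (j + 1) * 2 ^ j) ≤ ∑ j ∈ range m, e (j + 1) := by
      simpa using ihm.1
    have heq : (∑ j ∈ range m, e (j + 1) * 2 ^ j) = 0 →
        (∑ j ∈ range m, e (j + 1)) = 0 → ∀ j < m, e (j + 1) = 0 := by
      simpa using ihm.2
    constructor
    · rw [hsplit, hsplit']
      omega
    · intro h0 hsum0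
      rw [hsplit] at h0
      rw [hsplit'] at hsum0
      have hw0 : (∑ j ∈ range m, e (j + 1) * 2 ^ j) = 0 := by omega
      have hs0 : (∑ j ∈ range m, e (j + 1)) = 0 := by omega
      have he00 : e 0 = 0 := by omega
      have hall := heq hw0 hs0
      intro j hj
      cases j with
      | zero => exact he00
      | succ k => exact hall k (by omega)

lemma aux_geom (m : ℕ) : (∑ j ∈ range m, (2 : ℤ) ^ j) = 2 ^ m - 1 := by
  induction m with
  | zero => simp
  | succ m ih => rw [Finset.sum_range_succ, ih]; ring

theorem sum_three_element_powers_eq_iff_exact_cover {d : ℕ}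
    (S : Fin d → Finset ℕ) (hsub : ∀ ℓ, S ℓ ⊆ Finset.range (3 * d))
    (hcard : ∀ ℓ, (S ℓ).card = 3) :
    (∑ ℓ : Fin d, ∑ j ∈ S ℓ, 2 ^ j) = 2 ^ (3 * d) - 1 ↔
      ((∀ i j : Fin d, i ≠ j → Disjoint (S i) (S j)) ∧
        ∀ x < 3 * d, ∃ ℓ, x ∈ S ℓ) := by
  set m := 3 * d with hm
  set c : ℕ → ℤ := fun j => ∑ ℓ : Fin d, if j ∈ S ℓ then 1 else 0 with hc
  -- rewriting each inner sum over range m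
  have hinner : ∀ ℓ : Fin d,
      (∑ j ∈ range m, (if j ∈ S ℓ then (1 : ℤ) else 0) * 2 ^ j)
        = ∑ j ∈ S ℓ, (2 : ℤ) ^ j := by
    intro ℓ
    calc (∑ j ∈ range m, (if j ∈ S ℓ then (1 : ℤ) else 0) * 2 ^ j)
        = ∑ j ∈ range m, (if j ∈ S ℓ then (2 : ℤ) ^ j else 0) := by
          refine Finset.sum_congr rfl fun j _ => ?_
          split <;> simp
      _ = ∑ j ∈ range m ∩ S ℓ, (2 : ℤ) ^ j := Finset.sum_ite_mem _ _ _
      _ = ∑ j ∈ S ℓ, (2 : ℤ) ^ j := by rw [Finset.inter_eq_right.mpr (hsub ℓ)]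
  -- (A) cast of LHS
  have hA : ((∑ ℓ : Fin d, ∑ j ∈ S ℓ, 2 ^ j : ℕ) : ℤ)
      = ∑ j ∈ range m, c j * 2 ^ j := by
    push_cast
    rw [Finset.sum_congr rfl (fun ℓ _ => (hinner ℓ).symm), Finset.sum_comm]
    refine Finset.sum_congr rfl (fun j _ => ?_)
    simp only [hc]
    rw [Finset.sum_mul]
  -- (B) total multiplicity
  have hB : (∑ j ∈ range m, c j) = (m : ℤ) := by
    simp only [hc]
    rw [Finset.sum_comm]
    have h3 : ∀ ℓ : Fin d, (∑ j ∈ range m, if j ∈ S ℓ then (1 : ℤ) else 0) = 3 := by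
      intro ℓ
      rw [Finset.sum_ite_mem, Finset.inter_eq_right.mpr (hsub ℓ)]
      simp [hcard ℓ]
    rw [Finset.sum_congr rfl (fun ℓ _ => h3 ℓ), Finset.sum_const]
    simp [hm]
    ring
  -- the LHS equation is equivalent to c j = 1 for all j < m
  have hmain : (∑ ℓ : Fin d, ∑ j ∈ S ℓ, 2 ^ j) = 2 ^ m - 1 ↔
      ∀ j < m, c j = 1 := by
    have h1 : (1 : ℕ) ≤ 2 ^ m := Nat.one_le_two_pow
    rw [← Nat.cast_inj (R := ℤ), hA, Nat.cast_sub h1]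
    push_cast
    constructor
    · intro h
      have hz : (∑ j ∈ range m, (c j - 1) * 2 ^ j) = 0 := by
        have hsd : (∑ j ∈ range m, (c j - 1) * 2 ^ j)
            = (∑ j ∈ range m, c j * 2 ^ j) - ∑ j ∈ range m, (2 : ℤ) ^ j := by
          rw [← Finset.sum_sub_distrib]
          exact Finset.sum_congr rfl fun j _ => by ring
        rw [hsd, h, aux_geom m]
        ring
      have hz' : (∑ j ∈ range m, (c j - 1)) = 0 := by
        rw [Finset.sum_sub_distrib, hB]
        simp
      have hnn : ∀ j < m, -1 ≤ c j - 1 := by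
        intro j hj
        have : (0 : ℤ) ≤ c j := by
          simp only [hc]
          exact Finset.sum_nonneg (fun ℓ _ => by positivity)
        omega
      have hall := (aux_key m (fun j => c j - 1) hnn (le_of_eq hz)).2
      have hfin := hall hz hz'
      intro j hj
      have := hfin j hj
      omega
    · intro h
      calc (∑ j ∈ range m, c j * 2 ^ j)
          = ∑ j ∈ range m, (2 : ℤ) ^ j := Finset.sum_congr rfl fun j hj => by
            rw [h j (Finset.mem_range.mp hj), one_mul]
        _ = 2 ^ m - 1 := aux_geom m
  rw [hmain]
  constructor
  · intro hone
    constructor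
    · intro i j hij
      rw [Finset.disjoint_left]
      intro x hxi hxj
      have hxm : x < m := Finset.mem_range.mp (hsub i hxi)
      have h2 : (2 : ℤ) ≤ c x := by
        simp only [hc]
        calc (2 : ℤ) = ∑ ℓ ∈ ({i, j} : Finset (Fin d)),
              (if x ∈ S ℓ then (1 : ℤ) else 0) := by
              rw [Finset.sum_pair hij]
              simp [hxi, hxj]
          _ ≤ ∑ ℓ : Fin d, (if x ∈ S ℓ then (1 : ℤ) else 0) :=
              Finset.sum_le_sum_of_subset_of_nonneg (Finset.subset_univ _)
                (fun ℓ _ _ => by positivity)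
      rw [hone x hxm] at h2
      omega
    · intro x hx
      by_contra hno
      push_neg at hno
      have hcx : c x = 0 := by
        simp only [hc]
        exact Finset.sum_eq_zero (fun ℓ _ => by simp [hno ℓ])
      rw [hone x hx] at hcx
      omega
  · rintro ⟨hdisj, hcov⟩
    intro j hj
    obtain ⟨ℓ₀, hℓ₀⟩ := hcov j hj
    simp only [hc]
    rw [Finset.sum_eq_single_of_mem ℓ₀ (Finset.mem_univ _) (fun b _ hb => by
      by_cases hbj : j ∈ S b
      · exact absurd hℓ₀ (Finset.disjoint_left.mp (hdisj b ℓ₀ hb) hbj)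
      · simp [hbj])]
    simp [hℓ₀]
end

section
/- Let V be a finite set with |V| = 3d and let ℰ be a family of 3-element subsets of V. Fix a bijection of V with {0,…,3d−1} and assign to each E ∈ ℰ the integer a_E = Σ_{j∈E} 2^j, and let b = 2^{3d} − 1. Then there exist d pairwise disjoint members of ℰ covering V if and only if there exist d distinct members E_1,…,E_d of ℰ with a_{E_1} + ⋯ + a_{E_d} = b. -/
open Finset

def sbits (m : ℕ) : ℕ := (Nat.digits 2 m).sum

lemma sbits_eq (m : ℕ) (h : m ≠ 0) : sbits m = m % 2 + sbits (m / 2) := by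
  unfold sbits
  rw [Nat.digits_def' (b := 2) (by norm_num) (Nat.pos_of_ne_zero h)]
  simp

lemma sbits_two_mul (b : ℕ) : sbits (2 * b) = sbits b := by
  rcases Nat.eq_zero_or_pos b with rfl | hb
  · simp
  · rw [sbits_eq _ (by omega)]
    have h1 : 2 * b % 2 = 0 := by omega
    have h2 : 2 * b / 2 = b := by omega
    rw [h1, h2]
    simp

lemma sbits_succ_le (m : ℕ) : sbits (m + 1) ≤ sbits m + 1 := by
  induction m using Nat.strong_induction_on with
  | _ m ih =>
    rcases Nat.even_or_odd m with ⟨k, rfl⟩ | ⟨k, rfl⟩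
    · rw [sbits_eq (k + k + 1) (by omega)]
      have h1 : (k + k + 1) % 2 = 1 := by omega
      have h2 : (k + k + 1) / 2 = k := by omega
      rw [h1, h2, show k + k = 2 * k by ring, sbits_two_mul]
      omega
    · have h3 : 2 * k + 1 + 1 = 2 * (k + 1) := by ring
      rw [h3, sbits_two_mul, sbits_eq (2 * k + 1) (by omega)]
      have h1 : (2 * k + 1) % 2 = 1 := by omega
      have h2 : (2 * k + 1) / 2 = k := by omega
      rw [h1, h2]
      have := ih k (by omega)
      omega

lemma sbits_add_le (m a : ℕ) : sbits (m + a) ≤ sbits m + a := by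
  induction a with
  | zero => simp
  | succ a ih =>
    have := sbits_succ_le (m + a)
    have h : m + (a + 1) = (m + a) + 1 := by ring
    rw [h]; omega

lemma sbits_pow_pred (n : ℕ) : sbits (2 ^ n - 1) = n := by
  induction n with
  | zero => simp [sbits]
  | succ n ih =>
    have h1 : 1 ≤ 2 ^ n := Nat.one_le_two_pow
    have hp : 2 ^ (n + 1) = 2 * 2 ^ n := by rw [pow_succ]; ring
    rw [sbits_eq (2 ^ (n + 1) - 1) (by omega)]
    have h2 : (2 ^ (n + 1) - 1) % 2 = 1 := by omega
    have h3 : (2 ^ (n + 1) - 1) / 2 = 2 ^ n - 1 := by omega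
    rw [h2, h3, ih]
    omega

lemma sbits_sum_le (n : ℕ) (c : ℕ → ℕ) :
    sbits (∑ j ∈ range n, c j * 2 ^ j) ≤ ∑ j ∈ range n, c j := by
  induction n generalizing c with
  | zero => simp [sbits]
  | succ n ih =>
    rw [Finset.sum_range_succ' (fun j => c j * 2 ^ j), Finset.sum_range_succ' c]
    have h : ∑ j ∈ range n, c (j + 1) * 2 ^ (j + 1)
        = 2 * ∑ j ∈ range n, c (j + 1) * 2 ^ j := by
      rw [Finset.mul_sum]; exact Finset.sum_congr rfl (fun _ _ => by ring)
    rw [h]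
    calc sbits (2 * ∑ j ∈ range n, c (j + 1) * 2 ^ j + c 0 * 2 ^ 0)
        ≤ sbits (2 * ∑ j ∈ range n, c (j + 1) * 2 ^ j) + c 0 * 2 ^ 0 :=
          sbits_add_le _ _
      _ = sbits (∑ j ∈ range n, c (j + 1) * 2 ^ j) + c 0 * 2 ^ 0 := by
          rw [sbits_two_mul]
      _ ≤ (∑ j ∈ range n, c (j + 1)) + c 0 * 2 ^ 0 :=
          Nat.add_le_add_right (ih _) _
      _ ≤ (∑ j ∈ range n, c (j + 1)) + c 0 := by simp

lemma all_ones (n : ℕ) (c : ℕ → ℕ)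
    (hv : ∑ j ∈ range n, c j * 2 ^ j = 2 ^ n - 1)
    (hc : ∑ j ∈ range n, c j = n) :
    ∀ j < n, c j = 1 := by
  induction n generalizing c with
  | zero => intro j hj; omega
  | succ n ih =>
    have h1 : 1 ≤ 2 ^ n := Nat.one_le_two_pow
    have hp : 2 ^ (n + 1) = 2 * 2 ^ n := by rw [pow_succ]; ring
    rw [Finset.sum_range_succ' (fun j => c j * 2 ^ j)] at hv
    rw [Finset.sum_range_succ' c] at hc
    have h2 : ∑ j ∈ range n, c (j + 1) * 2 ^ (j + 1)
        = 2 * ∑ j ∈ range n, c (j + 1) * 2 ^ j := by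
      rw [Finset.mul_sum]; exact Finset.sum_congr rfl (fun _ _ => by ring)
    rw [h2, pow_zero, mul_one] at hv
    have hsb : sbits (∑ j ∈ range n, c (j + 1) * 2 ^ j) ≤ ∑ j ∈ range n, c (j + 1) :=
      sbits_sum_le n _
    set A := ∑ j ∈ range n, c (j + 1) * 2 ^ j with hA
    set S := ∑ j ∈ range n, c (j + 1) with hS
    set t := c 0 / 2 with ht
    have hodd : c 0 = 2 * t + 1 := by omega
    have hAval : A + t = 2 ^ n - 1 := by omega
    have hsb2 : sbits (2 ^ n - 1) ≤ sbits A + t := by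
      rw [← hAval]; exact sbits_add_le A t
    rw [sbits_pow_pred] at hsb2
    have ht0 : t = 0 := by omega
    have hv' : ∑ j ∈ range n, c (j + 1) * 2 ^ j = 2 ^ n - 1 := by rw [← hA]; omega
    have hc' : ∑ j ∈ range n, c (j + 1) = n := by rw [← hS]; omega
    have hrec := ih (fun j => c (j + 1)) (by simpa using hv') (by simpa using hc')
    intro j hj
    cases j with
    | zero => omega
    | succ k => exact hrec k (by omega)

theorem exact_cover_iff_subset_sum {V : Type*} [Fintype V] [DecidableEq V] {d : ℕ}
    (hV : Fintype.card V = 3 * d) (f : V ≃ Fin (3 * d))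
    (ℰ : Finset (Finset V)) (hcard : ∀ E ∈ ℰ, E.card = 3) :
    (∃ F ⊆ ℰ, F.card = d ∧
        (∀ E₁ ∈ F, ∀ E₂ ∈ F, E₁ ≠ E₂ → Disjoint E₁ E₂) ∧
        ∀ v : V, ∃ E ∈ F, v ∈ E) ↔
      (∃ F ⊆ ℰ, F.card = d ∧
        ∑ E ∈ F, (∑ v ∈ E, 2 ^ ((f v : ℕ))) = 2 ^ (3 * d) - 1) := by
  have hgeo : ∑ j ∈ range (3 * d), 2 ^ j = 2 ^ (3 * d) - 1 := by
    induction (3 * d) with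
    | zero => simp
    | succ n ih =>
      have h1 : 1 ≤ 2 ^ n := Nat.one_le_two_pow
      rw [Finset.sum_range_succ, ih, pow_succ]
      omega
  have hinj : ∀ v v' : V, (f v : ℕ) = (f v' : ℕ) → v = v' := by
    intro v v' h
    exact f.injective (Fin.ext h)
  have hEval : ∀ E : Finset V, ∑ v ∈ E, 2 ^ ((f v : ℕ)) =
      ∑ j ∈ range (3 * d), (E.filter (fun v => (f v : ℕ) = j)).card * 2 ^ j := by
    intro E
    have h1 : ∀ j, (E.filter (fun v => (f v : ℕ) = j)).card * 2 ^ j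
        = ∑ v ∈ E, if (f v : ℕ) = j then 2 ^ j else 0 := by
      intro j
      rw [← Finset.sum_filter, Finset.sum_const, smul_eq_mul]
    calc ∑ v ∈ E, 2 ^ ((f v : ℕ))
        = ∑ v ∈ E, ∑ j ∈ range (3 * d), (if (f v : ℕ) = j then 2 ^ j else 0) := by
          refine Finset.sum_congr rfl fun v _ => ?_
          rw [Finset.sum_ite_eq (range (3 * d)) ((f v : ℕ)) (fun j => 2 ^ j)]
          simp [(f v).isLt]
      _ = ∑ j ∈ range (3 * d), ∑ v ∈ E, (if (f v : ℕ) = j then 2 ^ j else 0) :=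
          Finset.sum_comm
      _ = ∑ j ∈ range (3 * d), (E.filter (fun v => (f v : ℕ) = j)).card * 2 ^ j :=
          Finset.sum_congr rfl fun j _ => (h1 j).symm
  have hEcard : ∀ E : Finset V,
      ∑ j ∈ range (3 * d), (E.filter (fun v => (f v : ℕ) = j)).card = E.card := by
    intro E
    calc ∑ j ∈ range (3 * d), (E.filter (fun v => (f v : ℕ) = j)).card
        = ∑ j ∈ range (3 * d), ∑ v ∈ E, (if (f v : ℕ) = j then 1 else 0) := by
          refine Finset.sum_congr rfl fun j _ => ?_
          rw [Finset.card_filter]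
      _ = ∑ v ∈ E, ∑ j ∈ range (3 * d), (if (f v : ℕ) = j then 1 else 0) :=
          Finset.sum_comm
      _ = ∑ v ∈ E, 1 := by
          refine Finset.sum_congr rfl fun v _ => ?_
          rw [Finset.sum_ite_eq (range (3 * d)) ((f v : ℕ)) (fun _ => 1)]
          simp [(f v).isLt]
      _ = E.card := by simp
  have hFval : ∀ F : Finset (Finset V),
      ∑ E ∈ F, ∑ v ∈ E, 2 ^ ((f v : ℕ)) =
      ∑ j ∈ range (3 * d),
        (∑ E ∈ F, (E.filter (fun v => (f v : ℕ) = j)).card) * 2 ^ j := by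
    intro F
    calc ∑ E ∈ F, ∑ v ∈ E, 2 ^ ((f v : ℕ))
        = ∑ E ∈ F, ∑ j ∈ range (3 * d),
            (E.filter (fun v => (f v : ℕ) = j)).card * 2 ^ j :=
          Finset.sum_congr rfl fun E _ => hEval E
      _ = ∑ j ∈ range (3 * d), ∑ E ∈ F,
            (E.filter (fun v => (f v : ℕ) = j)).card * 2 ^ j := Finset.sum_comm
      _ = ∑ j ∈ range (3 * d),
            (∑ E ∈ F, (E.filter (fun v => (f v : ℕ) = j)).card) * 2 ^ j :=
          Finset.sum_congr rfl fun j _ => (Finset.sum_mul _ _ _).symm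
  constructor
  · rintro ⟨F, hFE, hFd, hdisj, hcov⟩
    refine ⟨F, hFE, hFd, ?_⟩
    have hone : ∀ j ∈ range (3 * d),
        (∑ E ∈ F, (E.filter (fun v => (f v : ℕ) = j)).card) = 1 := by
      intro j hj
      rw [Finset.mem_range] at hj
      set v := f.symm ⟨j, hj⟩ with hv
      have hfv : (f v : ℕ) = j := by simp [hv]
      obtain ⟨E₀, hE₀F, hvE₀⟩ := hcov v
      rw [Finset.sum_eq_single_of_mem E₀ hE₀F]
      · rw [Finset.card_eq_one]
        refine ⟨v, ?_⟩
        ext v'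
        simp only [Finset.mem_filter, Finset.mem_singleton]
        constructor
        · rintro ⟨hv', hfv'⟩
          exact hinj v' v (by rw [hfv', hfv])
        · rintro rfl
          exact ⟨hvE₀, hfv⟩
      · intro E hEF hne
        rw [Finset.card_eq_zero, Finset.filter_eq_empty_iff]
        intro v' hv' hfv'
        have hvv : v' = v := hinj v' v (by rw [hfv', hfv])
        subst hvv
        exact (Finset.disjoint_left.mp (hdisj E hEF E₀ hE₀F hne) hv') hvE₀
    rw [hFval F]
    rw [Finset.sum_congr rfl (fun j hj => by rw [hone j hj, one_mul])]
    exact hgeo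
  · rintro ⟨F, hFE, hFd, hsum⟩
    have hv : ∑ j ∈ range (3 * d),
        (∑ E ∈ F, (E.filter (fun v => (f v : ℕ) = j)).card) * 2 ^ j
        = 2 ^ (3 * d) - 1 := by
      rw [← hFval F]; exact hsum
    have hcnt : ∑ j ∈ range (3 * d),
        (∑ E ∈ F, (E.filter (fun v => (f v : ℕ) = j)).card) = 3 * d := by
      rw [Finset.sum_comm]
      calc ∑ E ∈ F, ∑ j ∈ range (3 * d),
            (E.filter (fun v => (f v : ℕ) = j)).card
          = ∑ E ∈ F, E.card := Finset.sum_congr rfl fun E _ => hEcard E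
        _ = ∑ E ∈ F, 3 := Finset.sum_congr rfl fun E hE => hcard E (hFE hE)
        _ = 3 * d := by rw [Finset.sum_const, smul_eq_mul, hFd]; ring
    have hone : ∀ j < 3 * d,
        (∑ E ∈ F, (E.filter (fun v => (f v : ℕ) = j)).card) = 1 :=
      all_ones (3 * d) (fun j => ∑ E ∈ F, (E.filter (fun v => (f v : ℕ) = j)).card)
        hv hcnt
    refine ⟨F, hFE, hFd, ?_, ?_⟩
    · intro E₁ h₁ E₂ h₂ hne
      rw [Finset.disjoint_left]
      intro v hv1 hv2
      have hj := (f v).isLt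
      have ha : 1 ≤ (E₁.filter (fun v' => (f v' : ℕ) = (f v : ℕ))).card :=
        Finset.card_pos.mpr ⟨v, Finset.mem_filter.mpr ⟨hv1, rfl⟩⟩
      have hb : 1 ≤ (E₂.filter (fun v' => (f v' : ℕ) = (f v : ℕ))).card :=
        Finset.card_pos.mpr ⟨v, Finset.mem_filter.mpr ⟨hv2, rfl⟩⟩
      have hpair : ({E₁, E₂} : Finset (Finset V)) ⊆ F := by
        intro E hE
        rw [Finset.mem_insert, Finset.mem_singleton] at hE
        rcases hE with rfl | rfl
        · exact h₁
        · exact h₂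
      have hle : ∑ E ∈ ({E₁, E₂} : Finset (Finset V)),
          (E.filter (fun v' => (f v' : ℕ) = (f v : ℕ))).card
          ≤ ∑ E ∈ F, (E.filter (fun v' => (f v' : ℕ) = (f v : ℕ))).card :=
        Finset.sum_le_sum_of_subset hpair
      rw [Finset.sum_pair hne] at hle
      have := hone (f v : ℕ) hj
      omega
    · intro v
      have hj := (f v).isLt
      have h1 : (∑ E ∈ F, (E.filter (fun v' => (f v' : ℕ) = (f v : ℕ))).card) = 1 :=
        hone _ hj
      have hne0 : (∑ E ∈ F, (E.filter (fun v' => (f v' : ℕ) = (f v : ℕ))).card) ≠ 0 := by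
        omega
      obtain ⟨E, hEF, hEne⟩ := Finset.exists_ne_zero_of_sum_ne_zero hne0
      obtain ⟨v', hv'⟩ := Finset.card_pos.mp (Nat.pos_of_ne_zero hEne)
      rw [Finset.mem_filter] at hv'
      obtain ⟨hv'E, hv'eq⟩ := hv'
      have hvv : v' = v := hinj v' v hv'eq
      subst hvv
      exact ⟨E, hEF, hv'E⟩
end
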